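/- The function y ↦ −y/tanh(y) + 1 is strictly decreasing on (0, ∞). Consequently, if 0 < a_min ≤ a ≤ a_max and κ > 0, then −κ/tanh(κ·a_max/2) + 2/a_max ≤ −κ/tanh(κ·a/2) + 2/a ≤ −κ/tanh(κ·a_min/2) + 2/a_min. -/

import Mathlib

open Real

private lemma coth_aux (y : ℝ) (hy : 0 < y) :
    HasDerivAt (fun y : ℝ => -y * Real.cosh y / Real.sinh y + 1)
      ((y - Real.sinh y * Real.cosh y) / Real.sinh y ^ 2) y := by
  have hs : Real.sinh y ≠ 0 := ne_of_gt (by rwa [Real.sinh_pos_iff])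
  have h1 : HasDerivAt (fun y : ℝ => -y * Real.cosh y)
      (-1 * Real.cosh y + -y * Real.sinh y) y :=
    ((hasDerivAt_id y).neg).mul (Real.hasDerivAt_cosh y)
  have h2 := (h1.div (Real.hasDerivAt_sinh y) hs).add_const 1
  convert h2 using 1
  · rfl
  · rfl
  · rfl
  have := Real.cosh_sq_sub_sinh_sq y
  congr 1
  ring_nf
  nlinarith [this]

private lemma F_strictAnti :
    StrictAntiOn (fun y : ℝ => -y * Real.cosh y / Real.sinh y + 1) (Set.Ioi 0) := by
  apply strictAntiOn_of_deriv_neg (convex_Ioi 0)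
  · apply ContinuousOn.add _ continuousOn_const
    apply ContinuousOn.div
    · exact (continuousOn_id.neg.mul Real.continuous_cosh.continuousOn)
    · exact Real.continuous_sinh.continuousOn
    · intro x hx; exact ne_of_gt (by rw [Real.sinh_pos_iff]; exact hx)
  · intro x hx
    rw [interior_Ioi] at hx
    rw [(coth_aux x hx).deriv]
    have hs : 0 < Real.sinh x := by rwa [Real.sinh_pos_iff]
    have h1 : x < Real.sinh x := Real.self_lt_sinh_iff.mpr hx
    have h2 : (1:ℝ) ≤ Real.cosh x := Real.one_le_cosh x
    apply div_neg_of_neg_of_pos _ (by positivity)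
    nlinarith

private lemma f_eq_F {y : ℝ} (hy : 0 < y) :
    -y / Real.tanh y + 1 = -y * Real.cosh y / Real.sinh y + 1 := by
  rw [Real.tanh_eq_sinh_div_cosh, div_div_eq_mul_div]

private lemma H_aux (y : ℝ) (hy : 0 < y) :
    HasDerivAt (fun y : ℝ => 1 / y - Real.cosh y / Real.sinh y)
      (-(1 / y ^ 2) - (-1 / Real.sinh y ^ 2)) y := by
  have hs : Real.sinh y ≠ 0 := ne_of_gt (by rwa [Real.sinh_pos_iff])
  have h1 : HasDerivAt (fun y : ℝ => 1 / y) (-(1 / y ^ 2)) y := by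
    simpa using (hasDerivAt_inv (ne_of_gt hy))
  have h2 : HasDerivAt (fun y : ℝ => Real.cosh y / Real.sinh y)
      ((Real.sinh y * Real.sinh y - Real.cosh y * Real.cosh y) / Real.sinh y ^ 2) y :=
    (Real.hasDerivAt_cosh y).div (Real.hasDerivAt_sinh y) hs
  have h3 : (Real.sinh y * Real.sinh y - Real.cosh y * Real.cosh y) / Real.sinh y ^ 2
      = -1 / Real.sinh y ^ 2 := by
    have := Real.cosh_sq_sub_sinh_sq y
    rw [div_eq_div_iff (by positivity) (by positivity)]
    nlinarith
  rw [h3] at h2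
  exact h1.sub h2

private lemma H_anti :
    AntitoneOn (fun y : ℝ => 1 / y - Real.cosh y / Real.sinh y) (Set.Ioi 0) := by
  apply antitoneOn_of_deriv_nonpos (convex_Ioi 0)
  · apply ContinuousOn.sub
    · exact continuousOn_const.div continuousOn_id (fun x hx => ne_of_gt hx)
    · apply ContinuousOn.div Real.continuous_cosh.continuousOn
        Real.continuous_sinh.continuousOn
      intro x hx; exact ne_of_gt (by rw [Real.sinh_pos_iff]; exact hx)
  · intro x hx
    rw [interior_Ioi] at hx
    exact (H_aux x hx).differentiableAt.differentiableWithinAt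
  · intro x hx
    rw [interior_Ioi] at hx
    rw [(H_aux x hx).deriv]
    have hs : 0 < Real.sinh x := by rwa [Real.sinh_pos_iff]
    have hx' : 0 < x := hx
    have h1 : x < Real.sinh x := Real.self_lt_sinh_iff.mpr hx
    have h2 : 1 / Real.sinh x ^ 2 ≤ 1 / x ^ 2 := by
      apply one_div_le_one_div_of_le (by positivity); nlinarith
    have h3 : -1 / Real.sinh x ^ 2 = -(1 / Real.sinh x ^ 2) := by ring
    rw [h3]; linarith

private lemma g_eq (κ a : ℝ) (hκ : 0 < κ) (ha : 0 < a) :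
    -κ / Real.tanh (κ * a / 2) + 2 / a
      = κ * (1 / (κ * a / 2) - Real.cosh (κ * a / 2) / Real.sinh (κ * a / 2)) := by
  have hy : 0 < κ * a / 2 := by positivity
  have hs : Real.sinh (κ * a / 2) ≠ 0 := ne_of_gt (by rwa [Real.sinh_pos_iff])
  have hc : Real.cosh (κ * a / 2) ≠ 0 := ne_of_gt (Real.cosh_pos _)
  rw [Real.tanh_eq_sinh_div_cosh]
  field_simp
  ring

theorem stmt5 :
    StrictAntiOn (fun y : ℝ => -y / Real.tanh y + 1) (Set.Ioi 0) ∧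
    ∀ amin a amax κ : ℝ, 0 < amin → amin ≤ a → a ≤ amax → 0 < κ →
      (-κ / Real.tanh (κ * amax / 2) + 2 / amax ≤ -κ / Real.tanh (κ * a / 2) + 2 / a ∧
       -κ / Real.tanh (κ * a / 2) + 2 / a ≤ -κ / Real.tanh (κ * amin / 2) + 2 / amin) := by
  constructor
  · intro x hx y hy hxy
    have := F_strictAnti hx hy hxy
    simpa [f_eq_F (Set.mem_Ioi.mp hx), f_eq_F (Set.mem_Ioi.mp hy)] using this
  · intro amin a amax κ hmin hma hamax hκ
    have ha : 0 < a := lt_of_lt_of_le hmin hma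
    have hmax : 0 < amax := lt_of_lt_of_le ha hamax
    have key : ∀ b c : ℝ, 0 < b → b ≤ c →
        -κ / Real.tanh (κ * c / 2) + 2 / c ≤ -κ / Real.tanh (κ * b / 2) + 2 / b := by
      intro b c hb hbc
      have hc : 0 < c := lt_of_lt_of_le hb hbc
      rw [g_eq κ b hκ hb, g_eq κ c hκ hc]
      apply mul_le_mul_of_nonneg_left _ (le_of_lt hκ)
      apply H_anti (Set.mem_Ioi.mpr (by positivity)) (Set.mem_Ioi.mpr (by positivity))
      nlinarith
    exact ⟨key a amax ha hamax, key amin a hmin hma⟩
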